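/- arXiv:1407.2444 — 7 statements merged into one kernel-verified Lean document; each statement's English description precedes it below -/
import Mathlib

section
/- Let p > 1 and let (σ_k)_{k≥0} be a sequence with σ_0 = 1 and θ ≤ σ_{k+1}/σ_k ≤ θ^α for all k, where 1 < α < p and θ > 1. Let f:[0,∞)→[0,∞) be non-decreasing and F(s) = sup_{1≤t≤s} f(t)/t. Then ∫_1^∞ s^{-p} F(s) ds ≥ (θ^{-α} − θ^{-p})/(p−1) · Σ_{k=0}^∞ σ_k^{-p} f(σ_k). -/
open MeasureTheory

/-- If `σ 0 = 1`, `θ ≤ σ (k+1) / σ k ≤ θ^α` with `1 < α < p`,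
`θ > 1`, and `f : [0,∞) → [0,∞)` is non-decreasing with
`F s = sup_{1 ≤ t ≤ s} f t / t`, then
`∫_1^∞ s^{-p} F s ds ≥ (θ^{-α} - θ^{-p})/(p-1) * ∑ₖ (σ k)^{-p} f (σ k)`. -/
theorem stmt2 (p θ α : ℝ) (hp : 1 < p) (hθ : 1 < θ) (hα : 1 < α) (hαp : α < p)
    (σ : ℕ → ℝ) (hσ0 : σ 0 = 1) (hσpos : ∀ k, 0 < σ k)
    (hσlow : ∀ k, θ ≤ σ (k + 1) / σ k) (hσhigh : ∀ k, σ (k + 1) / σ k ≤ θ ^ α)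
    (f : ℝ → ℝ) (hf_nonneg : ∀ s, 0 ≤ s → 0 ≤ f s)
    (hf_mono : ∀ s t, 0 ≤ s → s ≤ t → f s ≤ f t)
    (F : ℝ → ℝ) (hF : ∀ s, F s = sSup ((fun t => f t / t) '' Set.Icc 1 s)) :
    ENNReal.ofReal ((θ ^ (-α) - θ ^ (-p)) / (p - 1)) *
        ∑' k : ℕ, ENNReal.ofReal ((σ k) ^ (-p) * f (σ k))
      ≤ ∫⁻ s in Set.Ici (1:ℝ), ENNReal.ofReal (s ^ (-p) * F s) := by
  have hθ0 : (0:ℝ) < θ := lt_trans one_pos hθ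
  have hmul : ∀ k, θ * σ k ≤ σ (k + 1) := fun k =>
    (le_div_iff₀ (hσpos k)).mp (hσlow k)
  have hσ1 : ∀ k, 1 ≤ σ k := by
    intro k
    induction k with
    | zero => simp [hσ0]
    | succ n ih => nlinarith [hmul n, hσpos n]
  have hlt : ∀ k, σ k < σ (k + 1) := by
    intro k; nlinarith [hmul k, hσpos k]
  have hσmono : StrictMono σ := strictMono_nat_of_lt_succ hlt
  set c : ℝ := (θ ^ (-α) - θ ^ (-p)) / (p - 1) with hc_def
  have hcnum : 0 ≤ θ ^ (-α) - θ ^ (-p) :=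
    sub_nonneg.mpr (Real.rpow_le_rpow_of_exponent_le hθ.le (by linarith))
  have hc : 0 ≤ c := div_nonneg hcnum (by linarith)
  set A : ℕ → Set ℝ := fun k => Set.Ioc (σ k) (σ (k + 1)) with hA_def
  have hdisj : Pairwise (Function.onFun Disjoint A) := by
    have key : ∀ i j, i < j → Disjoint (A i) (A j) := by
      intro i j hij
      refine Set.disjoint_left.mpr fun x hxi hxj => ?_
      have h1 : σ (i + 1) ≤ σ j := hσmono.monotone (Nat.succ_le_of_lt hij)
      exact absurd (hxi.2.trans h1) (not_le.mpr hxj.1)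
    intro i j hij
    rcases hij.lt_or_gt with h | h
    · exact key i j h
    · exact (key j i h).symm
  have hsub : (⋃ k, A k) ⊆ Set.Ici (1:ℝ) := by
    rintro x ⟨_, ⟨k, rfl⟩, hx⟩
    exact le_of_lt (lt_of_le_of_lt (hσ1 k) hx.1)
  -- key elementary inequality
  have hkey : θ ^ (-α) - θ ^ (-p) ≤ 1 - θ ^ (-p + 1) := by
    have e1 : θ ^ (-α) ≤ θ ^ (-1 : ℝ) :=
      Real.rpow_le_rpow_of_exponent_le hθ.le (by linarith)
    have e2 : θ ^ (-p + 1) ≤ 1 :=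
      Real.rpow_le_one_of_one_le_of_nonpos hθ.le (by linarith)
    have e4 : θ ^ (-1 : ℝ) ≤ 1 :=
      Real.rpow_le_one_of_one_le_of_nonpos hθ.le (by linarith)
    have e3 : θ ^ (-1 : ℝ) * θ ^ (-p + 1) = θ ^ (-p) := by
      rw [← Real.rpow_add hθ0]; ring_nf
    nlinarith [e1, e2, e3, e4]
  -- per-interval estimate
  have hk : ∀ k, ENNReal.ofReal (c * ((σ k) ^ (-p) * f (σ k))) ≤
      ∫⁻ s in A k, ENNReal.ofReal (s ^ (-p) * F s) := by
    intro k
    set a := σ k with ha_def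
    set b := σ (k + 1) with hb_def
    have ha1 : 1 ≤ a := hσ1 k
    have ha0 : 0 < a := lt_of_lt_of_le one_pos ha1
    have hab : θ * a ≤ b := hmul k
    have haltb : a < b := hlt k
    have hb0 : 0 < b := lt_trans ha0 haltb
    have hfa : 0 ≤ f a := hf_nonneg a ha0.le
    -- pointwise bound
    have hpt : ∀ s ∈ A k, ENNReal.ofReal (s ^ (-p) * (f a / a)) ≤
        ENNReal.ofReal (s ^ (-p) * F s) := by
      intro s hs
      have has : a ≤ s := hs.1.le
      have hs1 : 1 ≤ s := ha1.trans has
      have hbdd : BddAbove ((fun t => f t / t) '' Set.Icc 1 s) := by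
        refine ⟨f s, ?_⟩
        rintro y ⟨t, ⟨ht1, hts⟩, rfl⟩
        have h1 : f t / t ≤ f t := div_le_self (hf_nonneg t (by linarith)) ht1
        exact h1.trans (hf_mono t s (by linarith) hts)
      have hmem : f a / a ∈ (fun t => f t / t) '' Set.Icc 1 s :=
        ⟨a, ⟨ha1, has⟩, rfl⟩
      have hFs : f a / a ≤ F s := by
        rw [hF s]; exact le_csSup hbdd hmem
      exact ENNReal.ofReal_le_ofReal
        (mul_le_mul_of_nonneg_left hFs (Real.rpow_nonneg (by linarith) _))
    -- integrability
    have hcont : ContinuousOn (fun s : ℝ => s ^ (-p)) (Set.Icc a b) := by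
      refine ContinuousOn.rpow_const continuousOn_id fun x hx => Or.inl ?_
      exact ne_of_gt (lt_of_lt_of_le ha0 hx.1)
    have hint : IntegrableOn (fun s : ℝ => s ^ (-p) * (f a / a)) (Set.Ioc a b) :=
      ((hcont.integrableOn_Icc).mono_set Set.Ioc_subset_Icc_self).mul_const _
    have hnn : 0 ≤ᵐ[volume.restrict (Set.Ioc a b)]
        fun s : ℝ => s ^ (-p) * (f a / a) := by
      refine ae_restrict_of_forall_mem measurableSet_Ioc fun s hs => ?_
      exact mul_nonneg (Real.rpow_nonneg (le_of_lt (lt_trans ha0 hs.1)) _)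
        (div_nonneg hfa ha0.le)
    have heq : ∫⁻ s in A k, ENNReal.ofReal (s ^ (-p) * (f a / a)) =
        ENNReal.ofReal (∫ s in Set.Ioc a b, s ^ (-p) * (f a / a)) :=
      (ofReal_integral_eq_lintegral_ofReal hint hnn).symm
    -- compute the integral
    have hval : ∫ s in Set.Ioc a b, s ^ (-p) * (f a / a) =
        ((b ^ (-p + 1) - a ^ (-p + 1)) / (-p + 1)) * (f a / a) := by
      rw [MeasureTheory.integral_mul_const]
      congr 1
      rw [← intervalIntegral.integral_of_le haltb.le]
      rw [integral_rpow (Or.inr ⟨by intro h; nlinarith [neg_eq_iff_eq_neg.mp h], by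
        rw [Set.uIcc_of_le haltb.le]
        intro h
        exact absurd h.1 (not_le.mpr ha0)⟩)]
    -- the real inequality
    have hreal : c * (a ^ (-p) * f a) ≤
        ((b ^ (-p + 1) - a ^ (-p + 1)) / (-p + 1)) * (f a / a) := by
      have hq : b ^ (-p + 1) ≤ θ ^ (-p + 1) * a ^ (-p + 1) := by
        have h1 : b ^ (-p + 1) ≤ (θ * a) ^ (-p + 1) :=
          Real.rpow_le_rpow_of_nonpos (by positivity) hab (by linarith)
        rwa [Real.mul_rpow hθ0.le ha0.le] at h1
      have hAq : a ^ (-p + 1) = a ^ (-p) * a := by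
        rw [Real.rpow_add ha0, Real.rpow_one]
      have hA1 : (0:ℝ) ≤ a ^ (-p) := Real.rpow_nonneg ha0.le _
      have hAq0 : (0:ℝ) ≤ a ^ (-p + 1) := Real.rpow_nonneg ha0.le _
      -- rewrite RHS
      have hflip : ((b ^ (-p + 1) - a ^ (-p + 1)) / (-p + 1)) =
          ((a ^ (-p + 1) - b ^ (-p + 1)) / (p - 1)) := by
        rw [div_eq_div_iff (by linarith) (by linarith)]; ring
      rw [hflip, hc_def, div_mul_eq_mul_div, div_mul_eq_mul_div]
      rw [div_le_div_iff_of_pos_right (by linarith : (0:ℝ) < p - 1)]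
      have k2 : (θ ^ (-α) - θ ^ (-p)) * (a ^ (-p + 1)) ≤ a ^ (-p + 1) - b ^ (-p + 1) := by
        nlinarith [hq,
          mul_le_mul_of_nonneg_right hkey (Real.rpow_nonneg ha0.le (-p + 1))]
      have k3 : (θ ^ (-α) - θ ^ (-p)) * (a ^ (-p + 1)) * (f a / a) ≤
          (a ^ (-p + 1) - b ^ (-p + 1)) * (f a / a) :=
        mul_le_mul_of_nonneg_right k2 (div_nonneg hfa ha0.le)
      have k4 : (θ ^ (-α) - θ ^ (-p)) * (a ^ (-p + 1)) * (f a / a) =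
          (θ ^ (-α) - θ ^ (-p)) * (a ^ (-p) * f a) := by
        rw [hAq]; field_simp
      linarith [k3, k4]
    calc ENNReal.ofReal (c * (a ^ (-p) * f a))
        ≤ ENNReal.ofReal (((b ^ (-p + 1) - a ^ (-p + 1)) / (-p + 1)) * (f a / a)) :=
          ENNReal.ofReal_le_ofReal hreal
      _ = ∫⁻ s in A k, ENNReal.ofReal (s ^ (-p) * (f a / a)) := by rw [heq, hval]
      _ ≤ ∫⁻ s in A k, ENNReal.ofReal (s ^ (-p) * F s) :=
          setLIntegral_mono' measurableSet_Ioc hpt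
  calc ENNReal.ofReal c * ∑' k : ℕ, ENNReal.ofReal ((σ k) ^ (-p) * f (σ k))
      = ∑' k : ℕ, ENNReal.ofReal (c * ((σ k) ^ (-p) * f (σ k))) := by
        rw [← ENNReal.tsum_mul_left]
        exact tsum_congr fun k => (ENNReal.ofReal_mul hc).symm
    _ ≤ ∑' k : ℕ, ∫⁻ s in A k, ENNReal.ofReal (s ^ (-p) * F s) :=
        ENNReal.tsum_le_tsum hk
    _ = ∫⁻ s in ⋃ k, A k, ENNReal.ofReal (s ^ (-p) * F s) :=
        (lintegral_iUnion (fun k => measurableSet_Ioc) hdisj _).symm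
    _ ≤ ∫⁻ s in Set.Ici (1:ℝ), ENNReal.ofReal (s ^ (-p) * F s) :=
        lintegral_mono_set hsub
end

section
/- Let f:[0,∞)→[0,∞) be non-decreasing and p > 1. If there exists a sequence (s_k) with s_{k+1} ≥ θ s_k for some θ > 1, s_1 ≥ 1, and Σ_k s_k^{-p} f(s_k) = ∞, then ∫_1^∞ s^{-p} F(s) ds = ∞, where F(s) = sup_{1≤t≤s} f(t)/t. -/
open MeasureTheory

/-- Lemma 4.2, (i) ⟹ (ii). If `f : [0,∞) → [0,∞)` is
non-decreasing, `p > 1`, and there is a sequence `s_k` with `s_{k+1} ≥ θ s_k`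
(`θ > 1`), `s_1 ≥ 1`, and `∑ₖ s_k^{-p} f(s_k) = ∞`, then
`∫_1^∞ s^{-p} F(s) ds = ∞` where `F(s) = sup_{1 ≤ t ≤ s} f(t)/t`. -/
theorem stmt3 (p : ℝ) (hp : 1 < p)
    (f : ℝ → ℝ) (hf_nonneg : ∀ s, 0 ≤ s → 0 ≤ f s)
    (hf_mono : ∀ s t, 0 ≤ s → s ≤ t → f s ≤ f t)
    (θ : ℝ) (hθ : 1 < θ) (s : ℕ → ℝ) (hs1 : 1 ≤ s 1)
    (hsgrow : ∀ k : ℕ, θ * s k ≤ s (k + 1))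
    (hdiv : ∑' k : ℕ, ENNReal.ofReal ((s (k + 1)) ^ (-p) * f (s (k + 1))) = ⊤)
    (F : ℝ → ℝ) (hF : ∀ t, F t = sSup ((fun u => f u / u) '' Set.Icc 1 t)) :
    ∫⁻ t in Set.Ici (1:ℝ), ENNReal.ofReal (t ^ (-p) * F t) = ⊤ := by
  have hθ0 : (0:ℝ) < θ := lt_trans one_pos hθ
  -- all terms s (k+1) are ≥ 1
  have hg1 : ∀ k, 1 ≤ s (k + 1) := by
    intro k; induction k with
    | zero => exact hs1
    | succ n ih => nlinarith [hsgrow (n + 1)]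
  have hgpos : ∀ k, (0:ℝ) < s (k + 1) := fun k => lt_of_lt_of_le one_pos (hg1 k)
  have hgmono : Monotone (fun k => s (k + 1)) := by
    apply monotone_nat_of_le_succ
    intro k
    nlinarith [hsgrow (k + 1), hg1 k]
  -- the disjoint intervals
  set T : ℕ → Set ℝ := fun k => Set.Ico (s (k + 1)) (θ * s (k + 1)) with hT
  have hTm : ∀ k, MeasurableSet (T k) := fun k => measurableSet_Ico
  have hTsub : ∀ k, T k ⊆ Set.Ici (1:ℝ) := fun k t ht => le_trans (hg1 k) ht.1
  have hkey : ∀ i j : ℕ, i < j → Disjoint (T i) (T j) := by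
    intro i j hij
    have h1 : θ * s (i + 1) ≤ s (j + 1) :=
      le_trans (hsgrow (i + 1)) (hgmono (by omega : i + 1 ≤ j))
    apply Set.disjoint_left.mpr
    rintro t ⟨_, ht2⟩ ⟨ht3, _⟩
    linarith
  have hdisj : Pairwise (Function.onFun Disjoint T) := by
    intro i j hij
    rcases hij.lt_or_gt with h | h
    · exact hkey i j h
    · exact (hkey j i h).symm
  -- bounded above
  have hbdd : ∀ t : ℝ, 1 ≤ t → BddAbove ((fun u => f u / u) '' Set.Icc 1 t) := by
    intro t ht
    refine ⟨f t, ?_⟩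
    rintro x ⟨u, ⟨hu1, hut⟩, rfl⟩
    have h0u : (0:ℝ) ≤ u := le_trans zero_le_one hu1
    calc f u / u ≤ f u := div_le_self (hf_nonneg u h0u) hu1
      _ ≤ f t := hf_mono u t h0u hut
  -- the constant
  set C : ℝ := θ ^ (-p) * (θ - 1) with hCdef
  have hC : 0 < C := mul_pos (Real.rpow_pos_of_pos hθ0 _) (by linarith)
  -- lower bound each piece
  have hpiece : ∀ k : ℕ,
      ENNReal.ofReal (C * ((s (k + 1)) ^ (-p) * f (s (k + 1)))) ≤
        ∫⁻ t in T k, ENNReal.ofReal (t ^ (-p) * F t) := by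
    intro k
    set a : ℝ := s (k + 1) with ha
    have ha1 : (1:ℝ) ≤ a := hg1 k
    have ha0 : (0:ℝ) < a := hgpos k
    have hfa : 0 ≤ f a := hf_nonneg a ha0.le
    have hvol : volume (T k) = ENNReal.ofReal ((θ - 1) * a) := by
      rw [hT]
      simp only
      rw [Real.volume_Ico]
      congr 1
      ring
    have hconst : ∫⁻ _ in T k,
        ENNReal.ofReal ((θ * a) ^ (-p) * (f a / a)) = ENNReal.ofReal ((θ * a) ^ (-p) * (f a / a)) * volume (T k) :=
      setLIntegral_const _ _
    have hmono : ∫⁻ t in T k, ENNReal.ofReal ((θ * a) ^ (-p) * (f a / a)) ≤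
        ∫⁻ t in T k, ENNReal.ofReal (t ^ (-p) * F t) := by
      refine lintegral_mono_ae ((ae_restrict_iff' (hTm k)).2 (ae_of_all _ ?_))
      rintro t ⟨ht1, ht2⟩
      have ht0 : (0:ℝ) < t := lt_of_lt_of_le ha0 ht1
      apply ENNReal.ofReal_le_ofReal
      have h1 : (θ * a) ^ (-p) ≤ t ^ (-p) :=
        Real.rpow_le_rpow_of_nonpos ht0 ht2.le (by linarith)
      have h2 : f a / a ≤ F t := by
        rw [hF t]
        exact le_csSup (hbdd t (le_trans ha1 ht1)) ⟨a, ⟨ha1, ht1⟩, rfl⟩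
      have h3 : 0 ≤ f a / a := div_nonneg hfa ha0.le
      have h4 : 0 ≤ t ^ (-p) := Real.rpow_nonneg ht0.le _
      exact mul_le_mul h1 h2 h3 h4
    calc ENNReal.ofReal (C * (a ^ (-p) * f a))
        = ENNReal.ofReal ((θ * a) ^ (-p) * (f a / a) * ((θ - 1) * a)) := by
          congr 1
          rw [Real.mul_rpow hθ0.le ha0.le]
          field_simp
          ring
      _ = ENNReal.ofReal ((θ * a) ^ (-p) * (f a / a)) * ENNReal.ofReal ((θ - 1) * a) := by
          rw [ENNReal.ofReal_mul
            (mul_nonneg (Real.rpow_nonneg (mul_pos hθ0 ha0).le _) (div_nonneg hfa ha0.le))]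
      _ = ENNReal.ofReal ((θ * a) ^ (-p) * (f a / a)) * volume (T k) := by rw [hvol]
      _ = ∫⁻ _ in T k, ENNReal.ofReal ((θ * a) ^ (-p) * (f a / a)) := hconst.symm
      _ ≤ ∫⁻ t in T k, ENNReal.ofReal (t ^ (-p) * F t) := hmono
  -- put everything together
  have htop : (⊤ : ENNReal) ≤ ∫⁻ t in Set.Ici (1:ℝ), ENNReal.ofReal (t ^ (-p) * F t) := by
    have hCne : ENNReal.ofReal C ≠ 0 := by
      simp [ENNReal.ofReal_eq_zero, not_le, hC]
    calc (⊤ : ENNReal) = ENNReal.ofReal C * ⊤ := (ENNReal.mul_top hCne).symm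
      _ = ENNReal.ofReal C *
          ∑' k : ℕ, ENNReal.ofReal ((s (k + 1)) ^ (-p) * f (s (k + 1))) := by rw [hdiv]
      _ = ∑' k : ℕ, ENNReal.ofReal C * ENNReal.ofReal ((s (k + 1)) ^ (-p) * f (s (k + 1))) :=
          ENNReal.tsum_mul_left.symm
      _ = ∑' k : ℕ, ENNReal.ofReal (C * ((s (k + 1)) ^ (-p) * f (s (k + 1)))) := by
          congr 1
          funext k
          rw [ENNReal.ofReal_mul hC.le]
      _ ≤ ∑' k : ℕ, ∫⁻ t in T k, ENNReal.ofReal (t ^ (-p) * F t) :=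
          ENNReal.tsum_le_tsum hpiece
      _ = ∫⁻ t in ⋃ k, T k, ENNReal.ofReal (t ^ (-p) * F t) :=
          (lintegral_iUnion hTm hdisj _).symm
      _ ≤ ∫⁻ t in Set.Ici (1:ℝ), ENNReal.ofReal (t ^ (-p) * F t) :=
          lintegral_mono_set (Set.iUnion_subset hTsub)
  exact top_le_iff.mp htop
end

section
/- Let f:[0,∞)→[0,∞) be non-decreasing, p > 1, and F(s) = sup_{1≤t≤s} f(t)/t. If ∫_1^∞ s^{-p} F(s) ds = ∞, then there exists θ > 1 and a sequence (s_j) with s_{j+1} ≥ θ s_j and Σ_j s_j^{-p} f(s_j) = ∞. -/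
open MeasureTheory
open scoped ENNReal

lemma lint_rpow (p a : ℝ) (hp : 1 < p) (ha : 0 < a) :
    ∫⁻ t in Set.Ici a, ENNReal.ofReal (t ^ (-p)) = ENNReal.ofReal (a ^ (1-p) / (p-1)) := by
  rw [← MeasureTheory.restrict_Ioi_eq_restrict_Ici]
  rw [← ofReal_integral_eq_lintegral_ofReal (integrableOn_Ioi_rpow_of_lt (by linarith) ha)]
  · rw [integral_Ioi_rpow_of_lt (by linarith) ha]
    congr 1
    rw [neg_div, ← div_neg]
    ring_nf
  · filter_upwards [ae_restrict_mem measurableSet_Ioi] with t ht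
    exact Real.rpow_nonneg (le_of_lt (ha.trans ht)) _

lemma F_bound (f : ℝ → ℝ) (hf_nonneg : ∀ s, 0 ≤ s → 0 ≤ f s)
    (hf_mono : ∀ s t, 0 ≤ s → s ≤ t → f s ≤ f t) (t : ℝ) :
    ENNReal.ofReal (sSup ((fun u => f u / u) '' Set.Icc 1 t)) ≤
      ∑' k : ℕ, Set.indicator (Set.Ici ((2:ℝ)^k / 2))
        (fun _ => ENNReal.ofReal (2 * (f (2^k) / 2^k))) t := by
  set J : ℕ := ⌊Real.logb 2 t⌋₊ + 1 with hJ
  set Fs : Finset ℕ := (Finset.range (J+1)).filter (fun j => (2:ℝ)^j / 2 ≤ t) with hFs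
  have hterm_nonneg : ∀ j : ℕ, 0 ≤ 2 * (f ((2:ℝ)^j) / 2^j) := by
    intro j
    have h2j : (0:ℝ) < 2^j := by positivity
    have := hf_nonneg (2^j) h2j.le
    positivity
  have hB : sSup ((fun u => f u / u) '' Set.Icc 1 t) ≤ ∑ j ∈ Fs, 2 * (f ((2:ℝ)^j) / 2^j) := by
    apply Real.sSup_le
    · rintro x ⟨u, ⟨hu1, hut⟩, rfl⟩
      have hu0 : (0:ℝ) < u := lt_of_lt_of_le one_pos hu1
      set k : ℕ := ⌊Real.logb 2 u⌋₊ with hk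
      have hlogb0 : 0 ≤ Real.logb 2 u := Real.logb_nonneg one_lt_two hu1
      have h2k : (2:ℝ)^k ≤ u := by
        have h1 : ((k:ℝ)) ≤ Real.logb 2 u := Nat.floor_le hlogb0
        have h2 : (2:ℝ)^(k:ℝ) ≤ (2:ℝ)^(Real.logb 2 u) :=
          Real.rpow_le_rpow_of_exponent_le one_le_two h1
        rwa [Real.rpow_logb two_pos (by norm_num) hu0, Real.rpow_natCast] at h2
      have hu2k1 : u ≤ (2:ℝ)^(k+1) := by
        have h1 : Real.logb 2 u ≤ ((k:ℝ)+1) := (Nat.lt_floor_add_one _).le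
        have h2 : (2:ℝ)^(Real.logb 2 u) ≤ (2:ℝ)^((k:ℝ)+1) :=
          Real.rpow_le_rpow_of_exponent_le one_le_two h1
        rw [Real.rpow_logb two_pos (by norm_num) hu0] at h2
        rw [show ((k:ℝ)+1) = ((k+1 : ℕ):ℝ) by push_cast; ring, Real.rpow_natCast] at h2
        exact h2
      have h2k0 : (0:ℝ) < 2^k := by positivity
      have hfk1 : 0 ≤ f ((2:ℝ)^(k+1)) := hf_nonneg _ (by positivity)
      have hfu : f u / u ≤ 2 * (f ((2:ℝ)^(k+1)) / 2^(k+1)) := by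
        have h1 : f u ≤ f ((2:ℝ)^(k+1)) := hf_mono u _ hu0.le hu2k1
        have h2 : f u / u ≤ f ((2:ℝ)^(k+1)) / u := by gcongr
        have h3 : f ((2:ℝ)^(k+1)) / u ≤ f ((2:ℝ)^(k+1)) / 2^k := by gcongr
        have h4 : f ((2:ℝ)^(k+1)) / 2^k = 2 * (f ((2:ℝ)^(k+1)) / 2^(k+1)) := by
          rw [pow_succ]; field_simp
        linarith
      have hmem : k + 1 ∈ Fs := by
        rw [hFs, Finset.mem_filter, Finset.mem_range]
        constructor
        · have hkJ : k ≤ ⌊Real.logb 2 t⌋₊ :=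
            Nat.floor_le_floor (Real.logb_le_logb_of_le one_lt_two hu0 hut)
          omega
        · have : (2:ℝ)^(k+1)/2 = 2^k := by rw [pow_succ]; field_simp
          rw [this]; exact h2k.trans hut
      calc f u / u ≤ 2 * (f ((2:ℝ)^(k+1)) / 2^(k+1)) := hfu
        _ ≤ ∑ j ∈ Fs, 2 * (f ((2:ℝ)^j) / 2^j) :=
            Finset.single_le_sum (fun j _ => hterm_nonneg j) hmem
    · exact Finset.sum_nonneg fun j _ => hterm_nonneg j
  calc ENNReal.ofReal (sSup ((fun u => f u / u) '' Set.Icc 1 t))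
      ≤ ENNReal.ofReal (∑ j ∈ Fs, 2 * (f ((2:ℝ)^j) / 2^j)) := ENNReal.ofReal_le_ofReal hB
    _ = ∑ j ∈ Fs, ENNReal.ofReal (2 * (f ((2:ℝ)^j) / 2^j)) :=
        ENNReal.ofReal_sum_of_nonneg (fun j _ => hterm_nonneg j)
    _ = ∑ j ∈ Fs, Set.indicator (Set.Ici ((2:ℝ)^j / 2))
        (fun _ => ENNReal.ofReal (2 * (f ((2:ℝ)^j) / 2^j))) t := by
        refine Finset.sum_congr rfl fun j hj => ?_
        rw [hFs, Finset.mem_filter] at hj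
        rw [Set.indicator_of_mem (Set.mem_Ici.mpr hj.2)]
    _ ≤ ∑' k : ℕ, Set.indicator (Set.Ici ((2:ℝ)^k / 2))
        (fun _ => ENNReal.ofReal (2 * (f (2^k) / 2^k))) t := ENNReal.sum_le_tsum Fs

/-- Lemma 4.2, (ii) ⟹ (i). If `f : [0,∞) → [0,∞)` is
non-decreasing, `p > 1`, `F(s) = sup_{1 ≤ t ≤ s} f(t)/t`, and
`∫_1^∞ s^{-p} F(s) ds = ∞`, then there are `θ > 1` and a sequence `s_j ≥ 1`
with `s_{j+1} ≥ θ s_j` and `∑ⱼ s_j^{-p} f(s_j) = ∞`. -/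
theorem stmt4 (p : ℝ) (hp : 1 < p)
    (f : ℝ → ℝ) (hf_nonneg : ∀ s, 0 ≤ s → 0 ≤ f s)
    (hf_mono : ∀ s t, 0 ≤ s → s ≤ t → f s ≤ f t)
    (F : ℝ → ℝ) (hF : ∀ t, F t = sSup ((fun u => f u / u) '' Set.Icc 1 t))
    (hdiv : ∫⁻ t in Set.Ici (1:ℝ), ENNReal.ofReal (t ^ (-p) * F t) = ⊤) :
    ∃ θ > (1:ℝ), ∃ s : ℕ → ℝ, (∀ j, 1 ≤ s j) ∧ (∀ j, θ * s j ≤ s (j + 1)) ∧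
      ∑' j : ℕ, ENNReal.ofReal ((s j) ^ (-p) * f (s j)) = ⊤ := by
  refine ⟨2, one_lt_two, fun j => 2 ^ j, fun j => one_le_pow₀ one_le_two, fun j => ?_, ?_⟩
  · show (2:ℝ) * 2 ^ j ≤ 2 ^ (j+1)
    rw [pow_succ, mul_comm]
  -- main part
  set ind : ℕ → ℝ → ℝ≥0∞ := fun k t => Set.indicator (Set.Ici ((2:ℝ)^k / 2))
    (fun _ => ENNReal.ofReal (2 * (f ((2:ℝ)^k) / 2^k))) t with hind
  set g : ℝ → ℝ≥0∞ := fun t => ENNReal.ofReal (t ^ (-p)) * ∑' k, ind k t with hg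
  have hmeas_rpow : Measurable fun t : ℝ => ENNReal.ofReal (t ^ (-p)) := by measurability
  have hmeas_ind : ∀ k, Measurable (ind k) := fun k =>
    Measurable.indicator measurable_const measurableSet_Ici
  have hmeas_g : Measurable g :=
    hmeas_rpow.mul (Measurable.ennreal_tsum hmeas_ind)
  have step1 : ∫⁻ t in Set.Ici (1:ℝ), ENNReal.ofReal (t ^ (-p) * F t) ≤
      ∫⁻ t in Set.Ici (1:ℝ), g t := by
    refine setLIntegral_mono hmeas_g fun t ht => ?_
    have ht1 : (1:ℝ) ≤ t := ht
    have hrp : 0 ≤ t ^ (-p) := Real.rpow_nonneg (by linarith) _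
    rw [ENNReal.ofReal_mul hrp, hg]
    exact mul_le_mul_right (hF t ▸ F_bound f hf_nonneg hf_mono t) _
  have step2 : ∫⁻ t in Set.Ici (1:ℝ), g t =
      ∑' k, ∫⁻ t in Set.Ici (1:ℝ), ENNReal.ofReal (t ^ (-p)) * ind k t := by
    rw [show g = fun t => ∑' k, ENNReal.ofReal (t ^ (-p)) * ind k t by
      funext t; rw [hg]; exact (ENNReal.tsum_mul_left).symm]
    exact lintegral_tsum fun k => (hmeas_rpow.mul (hmeas_ind k)).aemeasurable
  -- per-term computation
  have step3 : ∀ k : ℕ, ∫⁻ t in Set.Ici (1:ℝ), ENNReal.ofReal (t ^ (-p)) * ind k t ≤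
      ENNReal.ofReal ((2:ℝ) ^ p / (p-1)) * ENNReal.ofReal (((2:ℝ)^k) ^ (-p) * f (2^k)) := by
    intro k
    set a : ℝ := max ((2:ℝ)^k / 2) 1 with ha
    have h2k0 : (0:ℝ) < 2^k := by positivity
    have ha0 : (0:ℝ) < a := lt_of_lt_of_le one_pos (le_max_right _ _)
    have heq : ∀ t : ℝ, ENNReal.ofReal (t ^ (-p)) * ind k t =
        Set.indicator (Set.Ici ((2:ℝ)^k / 2))
          (fun t => ENNReal.ofReal (2 * (f ((2:ℝ)^k) / 2^k)) * ENNReal.ofReal (t ^ (-p))) t := by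
      intro t
      by_cases h : t ∈ Set.Ici ((2:ℝ)^k / 2)
      · rw [hind]; simp only [Set.indicator_of_mem h]
        exact mul_comm _ _
      · rw [hind]; simp only [Set.indicator_of_notMem h, mul_zero, zero_mul]
    calc ∫⁻ t in Set.Ici (1:ℝ), ENNReal.ofReal (t ^ (-p)) * ind k t
        = ∫⁻ t in Set.Ici (1:ℝ), Set.indicator (Set.Ici ((2:ℝ)^k / 2))
          (fun t => ENNReal.ofReal (2 * (f ((2:ℝ)^k) / 2^k)) * ENNReal.ofReal (t ^ (-p))) t := by
          simp_rw [heq]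
      _ = ∫⁻ t in Set.Ici ((2:ℝ)^k / 2) ∩ Set.Ici 1,
            ENNReal.ofReal (2 * (f ((2:ℝ)^k) / 2^k)) * ENNReal.ofReal (t ^ (-p)) := by
          rw [lintegral_indicator measurableSet_Ici, Measure.restrict_restrict measurableSet_Ici]
      _ = ENNReal.ofReal (2 * (f ((2:ℝ)^k) / 2^k)) * ∫⁻ t in Set.Ici a, ENNReal.ofReal (t ^ (-p)) := by
          rw [Set.Ici_inter_Ici, lintegral_const_mul' _ _ ENNReal.ofReal_ne_top]
      _ = ENNReal.ofReal (2 * (f ((2:ℝ)^k) / 2^k)) * ENNReal.ofReal (a ^ (1-p) / (p-1)) := by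
          rw [lint_rpow p a hp ha0]
      _ ≤ ENNReal.ofReal ((2:ℝ) ^ p / (p-1)) * ENNReal.ofReal (((2:ℝ)^k) ^ (-p) * f (2^k)) := by
          have hfk : 0 ≤ f ((2:ℝ)^k) := hf_nonneg _ h2k0.le
          rw [← ENNReal.ofReal_mul (mul_nonneg two_pos.le (div_nonneg hfk h2k0.le)),
            ← ENNReal.ofReal_mul (div_nonneg (by positivity) (by linarith))]
          apply ENNReal.ofReal_le_ofReal
          have hap : a ^ (1-p) ≤ ((2:ℝ)^k / 2) ^ (1-p) :=
            Real.rpow_le_rpow_of_nonpos (by positivity) (le_max_left _ _) (by linarith)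
          have key : ((2:ℝ)^k / 2) ^ (1-p) = 2 ^ (p - 1) * ((2:ℝ)^k) ^ (1 - p) := by
            rw [Real.div_rpow h2k0.le (by norm_num : (0:ℝ) ≤ 2), div_eq_mul_inv,
              ← Real.rpow_neg (by norm_num : (0:ℝ) ≤ 2), neg_sub]
            ring
          have key2 : ((2:ℝ)^k) ^ (1 - p) = 2^k * ((2:ℝ)^k) ^ (-p) := by
            rw [show (1 - p) = 1 + (-p) by ring, Real.rpow_add h2k0, Real.rpow_one]
          have key3 : (2:ℝ) ^ (p-1) = 2 ^ p / 2 := by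
            rw [show (p - 1) = p + (-1) by ring, Real.rpow_add (by norm_num : (0:ℝ) < 2)]
            rw [Real.rpow_neg_one]; ring
          have hrpk : (0:ℝ) ≤ ((2:ℝ)^k) ^ (-p) := Real.rpow_nonneg h2k0.le _
          calc 2 * (f ((2:ℝ)^k) / 2^k) * (a ^ (1-p) / (p-1))
              ≤ 2 * (f ((2:ℝ)^k) / 2^k) * (((2:ℝ)^k / 2) ^ (1-p) / (p-1)) := by
                apply mul_le_mul_of_nonneg_left _ (by positivity)
                apply div_le_div_of_nonneg_right hap (by linarith)
            _ = (2:ℝ) ^ p / (p-1) * (((2:ℝ)^k) ^ (-p) * f (2^k)) := by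
                have hxne : ((2:ℝ)^k) ≠ 0 := h2k0.ne'
                have hpne : p - 1 ≠ 0 := by linarith
                rw [key, key2, key3]
                field_simp
  have key : (⊤ : ℝ≥0∞) ≤ ENNReal.ofReal ((2:ℝ) ^ p / (p-1)) *
      ∑' k : ℕ, ENNReal.ofReal (((2:ℝ)^k) ^ (-p) * f (2^k)) := by
    rw [← ENNReal.tsum_mul_left, ← hdiv]
    exact step1.trans (step2.le.trans (le_of_eq rfl)) |>.trans
      (step2 ▸ ENNReal.tsum_le_tsum step3)
  have hCne : ENNReal.ofReal ((2:ℝ) ^ p / (p-1)) ≠ ⊤ := ENNReal.ofReal_ne_top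
  have := top_le_iff.mp key
  rcases ENNReal.mul_eq_top.mp this with h | h
  · exact h.2
  · exact absurd h.1 hCne
end

section
/- Let p > 1 and let (t_k) be defined by t_k = (ψ/φ_k)^{2/d} − 1/α², where ψ, α > 0 and (φ_k) is a positive sequence with φ_{k+1} ≥ θ φ_k (θ > 1) and φ_{k+1}/(α^d ψ) ≤ 1/2. Then with d ≥ 1 there exists σ > 0 depending only on d and θ such that ∫_{t_{k+1}}^{t_k} s^{d/2} ds ≥ σ (ψ/φ_k)^{1+2/d} for every such k. -/
set_option maxHeartbeats 1000000

/-- key integral lower bound from the proof of Theorem 4.1.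
With `t_k = (ψ/φ_k)^{2/d} − 1/α²`, `φ_{k+1} ≥ θ φ_k` (`θ > 1`) and
`φ_{k+1}/(α^d ψ) ≤ 1/2`, there is `σ > 0` depending only on `d` and `θ`
such that `∫_{t_{k+1}}^{t_k} s^{d/2} ds ≥ σ (ψ/φ_k)^{1+2/d}`. -/
theorem stmt8 (d : ℕ) (hd : 1 ≤ d) (θ : ℝ) (hθ : 1 < θ) :
    ∃ σ > (0:ℝ), ∀ (ψ α : ℝ) (φ : ℕ → ℝ) (t : ℕ → ℝ) (k : ℕ),
      0 < ψ → 0 < α → (∀ j, 0 < φ j) →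
      θ * φ k ≤ φ (k + 1) →
      φ (k + 1) / (α ^ (d:ℝ) * ψ) ≤ 1 / 2 →
      (∀ j, t j = (ψ / φ j) ^ (2 / (d:ℝ)) - 1 / α ^ 2) →
      σ * (ψ / φ k) ^ (1 + 2 / (d:ℝ)) ≤
        ∫ s in (t (k + 1))..(t k), s ^ ((d:ℝ) / 2) := by
  have hdR : (0:ℝ) < (d:ℝ) := by exact_mod_cast Nat.lt_of_lt_of_le Nat.zero_lt_one hd
  have hdne : (d:ℝ) ≠ 0 := ne_of_gt hdR
  set p : ℝ := (d:ℝ)/2 + 1 with hpdef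
  have hp1 : (0:ℝ) < p := by positivity
  have hθ0 : (0:ℝ) < θ := lt_trans one_pos hθ
  have hexp1 : -(1 + 2/(d:ℝ)) < 0 := by
    have : (0:ℝ) < 1 + 2/(d:ℝ) := by positivity
    linarith
  have hexp2 : -(2/(d:ℝ)) < 0 := by
    have : (0:ℝ) < 2/(d:ℝ) := by positivity
    linarith
  have hA : θ ^ (-(1 + 2/(d:ℝ))) < 1 := Real.rpow_lt_one_of_one_lt_of_neg hθ hexp1
  have hB : (2:ℝ) ^ (-(2/(d:ℝ))) < 1 :=
    Real.rpow_lt_one_of_one_lt_of_neg one_lt_two hexp2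
  have hBpos : (0:ℝ) < (2:ℝ) ^ (-(2/(d:ℝ))) := Real.rpow_pos_of_pos two_pos _
  have h1 : 0 < 1 - θ ^ (-(1 + 2/(d:ℝ))) := by linarith
  have h2 : 0 < 1 - (2:ℝ) ^ (-(2/(d:ℝ))) := by linarith
  refine ⟨(1 - θ ^ (-(1 + 2/(d:ℝ)))) * (1 - (2:ℝ) ^ (-(2/(d:ℝ)))) ^ p / p,
    div_pos (mul_pos h1 (Real.rpow_pos_of_pos h2 p)) hp1, ?_⟩
  intro ψ α φ t k hψ hα hφ hθφ hhalf ht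
  set a : ℝ := (ψ / φ k) ^ (2/(d:ℝ)) with hadef
  set b : ℝ := (ψ / φ (k+1)) ^ (2/(d:ℝ)) with hbdef
  set c : ℝ := 1 / α ^ 2 with hcdef
  have ha0 : 0 < a := Real.rpow_pos_of_pos (div_pos hψ (hφ k)) _
  have hb0 : 0 < b := Real.rpow_pos_of_pos (div_pos hψ (hφ (k+1))) _
  have hc0 : 0 < c := by positivity
  have hθpos : 0 < θ ^ (-(2/(d:ℝ))) := Real.rpow_pos_of_pos hθ0 _
  have hθle : θ ^ (-(2/(d:ℝ))) ≤ 1 :=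
    le_of_lt (Real.rpow_lt_one_of_one_lt_of_neg hθ hexp2)
  -- b ≤ θ^(-(2/d)) * a
  have hba : b ≤ θ ^ (-(2/(d:ℝ))) * a := by
    have hstep : ψ / φ (k+1) ≤ θ⁻¹ * (ψ / φ k) := by
      rw [inv_mul_eq_div, div_div]
      exact div_le_div_of_nonneg_left hψ.le (mul_pos (hφ k) hθ0)
        (by linarith [hθφ])
    calc b ≤ (θ⁻¹ * (ψ / φ k)) ^ (2/(d:ℝ)) :=
          Real.rpow_le_rpow (le_of_lt (div_pos hψ (hφ (k+1)))) hstep (by positivity)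
      _ = θ ^ (-(2/(d:ℝ))) * a := by
          rw [Real.mul_rpow (inv_nonneg.mpr hθ0.le) (div_pos hψ (hφ k)).le,
            Real.inv_rpow hθ0.le, ← Real.rpow_neg hθ0.le]
  -- c ≤ 2^(-(2/d)) * b
  have hcb : c ≤ (2:ℝ) ^ (-(2/(d:ℝ))) * b := by
    have hαd : (0:ℝ) < α ^ (d:ℝ) := Real.rpow_pos_of_pos hα _
    have hφlt : φ (k+1) ≤ α ^ (d:ℝ) * ψ / 2 := by
      rw [div_le_div_iff₀ (by positivity) two_pos] at hhalf
      linarith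
    have hstep : 2 / α ^ (d:ℝ) ≤ ψ / φ (k+1) := by
      rw [div_le_div_iff₀ hαd (hφ (k+1))]
      nlinarith
    have hα2 : (α ^ (d:ℝ)) ^ (2/(d:ℝ)) = α ^ 2 := by
      rw [← Real.rpow_natCast α 2, ← Real.rpow_mul hα.le]
      congr 1
      push_cast
      field_simp
    have hkey : (2:ℝ) ^ (2/(d:ℝ)) * c ≤ b := by
      have h3 : ((2:ℝ) / α ^ (d:ℝ)) ^ (2/(d:ℝ)) ≤ b :=
        Real.rpow_le_rpow (by positivity) hstep (by positivity)
      have h4 : ((2:ℝ) / α ^ (d:ℝ)) ^ (2/(d:ℝ)) = (2:ℝ) ^ (2/(d:ℝ)) * c := by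
        rw [Real.div_rpow (by norm_num) hαd.le, hα2, hcdef]
        ring
      linarith
    have h5 : (2:ℝ) ^ (-(2/(d:ℝ))) * ((2:ℝ) ^ (2/(d:ℝ)) * c) ≤ (2:ℝ) ^ (-(2/(d:ℝ))) * b :=
      mul_le_mul_of_nonneg_left hkey hBpos.le
    calc c = (2:ℝ) ^ (-(2/(d:ℝ))) * ((2:ℝ) ^ (2/(d:ℝ)) * c) := by
          rw [← mul_assoc, ← Real.rpow_add two_pos]
          norm_num
      _ ≤ (2:ℝ) ^ (-(2/(d:ℝ))) * b := h5
  have htk : t k = a - c := by rw [ht k]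
  have htk1 : t (k+1) = b - c := by rw [ht (k+1)]
  -- positivity and ordering
  have htk1pos : 0 < b - c := by nlinarith
  have hstep2 : b - c ≤ θ ^ (-(2/(d:ℝ))) * (a - c) := by nlinarith
  have htkpos : 0 < a - c := by
    by_contra h
    push_neg at h
    have : θ ^ (-(2/(d:ℝ))) * (a - c) ≤ 0 :=
      mul_nonpos_of_nonneg_of_nonpos hθpos.le h
    linarith
  -- bound on a - c
  have hbla : b ≤ a := by nlinarith
  have hac : (1 - (2:ℝ) ^ (-(2/(d:ℝ)))) * a ≤ a - c := by nlinarith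
  -- power inequalities
  have hpow1 : (b - c) ^ p ≤ θ ^ (-(1 + 2/(d:ℝ))) * (a - c) ^ p := by
    calc (b - c) ^ p ≤ (θ ^ (-(2/(d:ℝ))) * (a - c)) ^ p :=
          Real.rpow_le_rpow htk1pos.le hstep2 hp1.le
      _ = θ ^ (-(1 + 2/(d:ℝ))) * (a - c) ^ p := by
          rw [Real.mul_rpow hθpos.le htkpos.le, ← Real.rpow_mul hθ0.le]
          congr 2
          rw [hpdef]
          field_simp
  have hpow2 : (1 - (2:ℝ) ^ (-(2/(d:ℝ)))) ^ p * a ^ p ≤ (a - c) ^ p := by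
    calc (1 - (2:ℝ) ^ (-(2/(d:ℝ)))) ^ p * a ^ p
        = ((1 - (2:ℝ) ^ (-(2/(d:ℝ)))) * a) ^ p := (Real.mul_rpow h2.le ha0.le).symm
      _ ≤ (a - c) ^ p := Real.rpow_le_rpow (by positivity) hac hp1.le
  have hap : a ^ p = (ψ / φ k) ^ (1 + 2/(d:ℝ)) := by
    rw [hadef, ← Real.rpow_mul (div_pos hψ (hφ k)).le]
    congr 1
    rw [hpdef]
    field_simp
  -- compute the integral
  have hint : (∫ s in (t (k + 1))..(t k), s ^ ((d:ℝ) / 2))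
      = ((t k) ^ p - (t (k+1)) ^ p) / p := by
    rw [integral_rpow (Or.inl (by linarith : (-1:ℝ) < (d:ℝ)/2))]
  rw [hint, htk, htk1, le_div_iff₀ hp1]
  have hmain : (1 - θ ^ (-(1 + 2/(d:ℝ)))) * ((1 - (2:ℝ) ^ (-(2/(d:ℝ)))) ^ p * a ^ p)
      ≤ (a - c) ^ p - (b - c) ^ p := by
    nlinarith [mul_le_mul_of_nonneg_left hpow2 h1.le, hpow1]
  calc (1 - θ ^ (-(1 + 2/(d:ℝ)))) * (1 - (2:ℝ) ^ (-(2/(d:ℝ)))) ^ p / p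
        * (ψ / φ k) ^ (1 + 2/(d:ℝ)) * p
      = (1 - θ ^ (-(1 + 2/(d:ℝ)))) * ((1 - (2:ℝ) ^ (-(2/(d:ℝ)))) ^ p * a ^ p) := by
        rw [← hap]
        field_simp
    _ ≤ (a - c) ^ p - (b - c) ^ p := hmain
end

section
/- For every d ≥ 1 there exists a constant c_d ∈ (0,1) such that for all r > 0 and t > 0: (4πt)^{-d/2} ∫_{B(0,r)} e^{-|x−y|²/(4t)} dy ≥ c_d (r/(r+√t))^d for every x ∈ ℝ^d with |x| ≤ r + √t. -/
open MeasureTheory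

/-- whole-space version of Lemma 2.1: there is `c_d ∈ (0,1)`
such that for all `r > 0`, `t > 0` and `|x| ≤ r + √t`,
`(4πt)^{-d/2} ∫_{B(0,r)} e^{-|x−y|²/(4t)} dy ≥ c_d (r/(r+√t))^d`. -/
theorem stmt11 (d : ℕ) (hd : 1 ≤ d) :
    ∃ c : ℝ, 0 < c ∧ c < 1 ∧
      ∀ (r t : ℝ), 0 < r → 0 < t →
        ∀ x : EuclideanSpace ℝ (Fin d), ‖x‖ ≤ r + Real.sqrt t →
          c * (r / (r + Real.sqrt t)) ^ (d : ℝ) ≤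
            (4 * Real.pi * t) ^ (-(d:ℝ) / 2) *
              ∫ y in Metric.ball (0 : EuclideanSpace ℝ (Fin d)) r,
                Real.exp (-(‖x - y‖ ^ 2) / (4 * t)) := by
  classical
  set E := EuclideanSpace ℝ (Fin d)
  haveI : Nontrivial E := by
    apply Module.nontrivial_of_finrank_pos (R := ℝ)
    rw [finrank_euclideanSpace_fin]; omega
  set V : ℝ := (volume (Metric.ball (0 : E) 1)).toReal with hVdef
  have hV : 0 < V := ENNReal.toReal_pos (Metric.measure_ball_pos volume 0 one_pos).ne'
    measure_ball_lt_top.ne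
  set A : ℝ := (4 * Real.pi) ^ (-(d:ℝ)/2) * Real.exp (-1) * V / 2 ^ d with hAdef
  have h4pi : (0:ℝ) < 4 * Real.pi := by positivity
  have hA : 0 < A := by
    apply div_pos (mul_pos (mul_pos (Real.rpow_pos_of_pos h4pi _) (Real.exp_pos _)) hV)
    positivity
  refine ⟨min A (1/2), lt_min hA (by norm_num), min_lt_of_right_lt (by norm_num), ?_⟩
  intro r t hr ht x hx
  set s := Real.sqrt t with hsdef
  have hs : 0 < s := Real.sqrt_pos.mpr ht
  have hts : t = s ^ 2 := (Real.sq_sqrt ht.le).symm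
  set ρ : ℝ := min r s / 2 with hρdef
  have hρ : 0 < ρ := by
    have := lt_min hr hs; positivity
  have hρr : ρ ≤ r / 2 := by
    have := min_le_left r s; rw [hρdef]; linarith
  have hρs : ρ ≤ s / 2 := by
    have := min_le_right r s; rw [hρdef]; linarith
  have hrs : 0 < r + s := by positivity
  -- the center z
  set lam : ℝ := (r - ρ) / (r + s) with hlam
  have hlam0 : 0 ≤ lam := by
    apply div_nonneg _ hrs.le; linarith
  have hlam1 : lam ≤ 1 := by
    rw [div_le_one hrs]; linarith
  set z : E := lam • x with hz
  have hznorm : ‖z‖ ≤ r - ρ := by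
    rw [hz, norm_smul, Real.norm_eq_abs, abs_of_nonneg hlam0]
    calc lam * ‖x‖ ≤ lam * (r + s) := by
          exact mul_le_mul_of_nonneg_left hx hlam0
      _ = r - ρ := by rw [hlam]; field_simp
  have hsub : Metric.ball z ρ ⊆ Metric.ball (0 : E) r := by
    intro y hy
    rw [Metric.mem_ball, dist_zero_right]
    have h1 : dist y z < ρ := hy
    calc ‖y‖ ≤ ‖z‖ + dist y z := by
          rw [dist_eq_norm]
          have := norm_add_le z (y - z); simpa using this
      _ < (r - ρ) + ρ := by exact add_lt_add_of_le_of_lt hznorm h1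
      _ = r := by ring
  -- distance bound on the small ball
  have hdist : ∀ y ∈ Metric.ball z ρ, ‖x - y‖ ≤ 2 * s := by
    intro y hy
    have h1 : ‖z - y‖ < ρ := by
      rw [← dist_eq_norm, dist_comm]; exact hy
    have h2 : ‖x - z‖ ≤ s + ρ := by
      have : x - z = (1 - lam) • x := by rw [hz]; module
      rw [this, norm_smul, Real.norm_eq_abs, abs_of_nonneg (by linarith)]
      calc (1 - lam) * ‖x‖ ≤ (1 - lam) * (r + s) := by
            exact mul_le_mul_of_nonneg_left hx (by linarith)
        _ = s + ρ := by rw [hlam]; field_simp; ring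
    calc ‖x - y‖ ≤ ‖x - z‖ + ‖z - y‖ := by
          have := norm_add_le (x - z) (z - y); simpa using this
      _ ≤ (s + ρ) + ρ := by linarith
      _ ≤ 2 * s := by linarith
  -- lower bound on the integrand on the small ball
  have hexp : ∀ y ∈ Metric.ball z ρ, Real.exp (-1) ≤ Real.exp (-(‖x - y‖ ^ 2) / (4 * t)) := by
    intro y hy
    apply Real.exp_le_exp.mpr
    have h1 := hdist y hy
    have h2 : ‖x - y‖ ^ 2 ≤ (2 * s) ^ 2 := by
      apply sq_le_sq' _ h1; have := norm_nonneg (x - y); linarith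
    rw [neg_div, neg_le_neg_iff, div_le_one (by positivity)]
    calc ‖x - y‖ ^ 2 ≤ (2 * s) ^ 2 := h2
      _ = 4 * t := by rw [hts]; ring
  -- integrability
  have hcont : Continuous fun y : E => Real.exp (-(‖x - y‖ ^ 2) / (4 * t)) := by
    fun_prop
  have hint : IntegrableOn (fun y : E => Real.exp (-(‖x - y‖ ^ 2) / (4 * t)))
      (Metric.ball (0 : E) r) volume := by
    apply Measure.integrableOn_of_bounded (M := 1) measure_ball_lt_top.ne
      hcont.aestronglyMeasurable
    filter_upwards with y
    rw [Real.norm_eq_abs, abs_of_pos (Real.exp_pos _), ← Real.exp_zero]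
    apply Real.exp_le_exp.mpr
    apply div_nonpos_of_nonpos_of_nonneg _ (by positivity)
    simp [sq_nonneg]
  -- integral lower bound
  have hvol : (volume (Metric.ball z ρ)).toReal = ρ ^ d * V := by
    rw [Measure.addHaar_ball volume z hρ.le, ENNReal.toReal_mul,
      ENNReal.toReal_ofReal (by positivity), finrank_euclideanSpace_fin]
  have hI1 : Real.exp (-1) * (ρ ^ d * V) ≤
      ∫ y in Metric.ball z ρ, Real.exp (-(‖x - y‖ ^ 2) / (4 * t)) := by
    rw [← hvol]
    exact setIntegral_ge_of_const_le_real measurableSet_ball measure_ball_lt_top.ne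
      hexp (hint.mono_set hsub)
  have hI2 : (∫ y in Metric.ball z ρ, Real.exp (-(‖x - y‖ ^ 2) / (4 * t))) ≤
      ∫ y in Metric.ball (0 : E) r, Real.exp (-(‖x - y‖ ^ 2) / (4 * t)) := by
    apply setIntegral_mono_set hint
    · filter_upwards with y using (Real.exp_pos _).le
    · exact HasSubset.Subset.eventuallyLE hsub
  -- rpow computations
  have hpow : (4 * Real.pi * t) ^ (-(d:ℝ)/2) = (4 * Real.pi) ^ (-(d:ℝ)/2) * (s ^ d)⁻¹ := by
    rw [hts, Real.mul_rpow h4pi.le (by positivity)]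
    congr 1
    rw [← Real.rpow_natCast s 2, ← Real.rpow_mul hs.le]
    rw [show ((2:ℕ):ℝ) * (-(d:ℝ)/2) = -(d:ℝ) by push_cast; ring, Real.rpow_neg hs.le, Real.rpow_natCast]
  have hbase : (r / (r + s)) ^ (d:ℝ) = (r / (r + s)) ^ d := Real.rpow_natCast _ d
  -- key elementary inequality: r/(r+s) ≤ 2 * ρ / s
  have hkey : r / (r + s) ≤ 2 * ρ / s := by
    rw [div_le_div_iff₀ hrs hs, hρdef]
    rcases le_total r s with h | h
    · rw [min_eq_left h]; nlinarith
    · rw [min_eq_right h]; nlinarith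
  have hbnn : 0 ≤ r / (r + s) := by positivity
  have hkeyd : (r / (r + s)) ^ d ≤ 2 ^ d * (ρ ^ d * (s ^ d)⁻¹) := by
    calc (r / (r + s)) ^ d ≤ (2 * ρ / s) ^ d := pow_le_pow_left₀ hbnn hkey d
      _ = 2 ^ d * (ρ ^ d * (s ^ d)⁻¹) := by
        rw [div_pow, mul_pow]; field_simp
  -- put it together
  rw [hbase, hpow]
  have hC : (0:ℝ) < (4 * Real.pi) ^ (-(d:ℝ)/2) := Real.rpow_pos_of_pos h4pi _
  calc min A (1/2) * (r / (r + s)) ^ d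
      ≤ A * (2 ^ d * (ρ ^ d * (s ^ d)⁻¹)) := by
        apply mul_le_mul (min_le_left _ _) hkeyd (by positivity) hA.le
    _ = (4 * Real.pi) ^ (-(d:ℝ)/2) * (s ^ d)⁻¹ * (Real.exp (-1) * (ρ ^ d * V)) := by
        rw [hAdef]; field_simp
    _ ≤ (4 * Real.pi) ^ (-(d:ℝ)/2) * (s ^ d)⁻¹ *
        ∫ y in Metric.ball (0 : E) r, Real.exp (-(‖x - y‖ ^ 2) / (4 * t)) := by
        apply mul_le_mul_of_nonneg_left (hI1.trans hI2) (by positivity)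
end

section
/- Let d ≥ 1 and G_t denote convolution with the Gaussian heat kernel on ℝ^d. Then for all r > 0 and all 0 < t ≤ r², (G_t χ_{B(0,r)})(x) ≥ β_d for all |x| ≤ r + √t, where β_d = c_d 2^{-d} with c_d the constant of the Gaussian lower-bound lemma. -/
open MeasureTheory

/-- whole-space version of Corollary 2.3: if `c_d` is a
constant for which the Gaussian lower-bound lemma holds
(`G_t χ_{B(0,r)}(x) ≥ c_d (r/(r+√t))^d` for `|x| ≤ r+√t`), then with
`β_d = c_d 2^{-d}` one has `G_t χ_{B(0,r)}(x) ≥ β_d` for all `0 < t ≤ r²`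
and `|x| ≤ r + √t`. -/
theorem stmt12 (d : ℕ) (hd : 1 ≤ d) (c : ℝ) (hc0 : 0 < c) (hc1 : c < 1)
    (hlemma : ∀ (r t : ℝ), 0 < r → 0 < t →
      ∀ x : EuclideanSpace ℝ (Fin d), ‖x‖ ≤ r + Real.sqrt t →
        c * (r / (r + Real.sqrt t)) ^ (d : ℝ) ≤
          (4 * Real.pi * t) ^ (-(d:ℝ) / 2) *
            ∫ y in Metric.ball (0 : EuclideanSpace ℝ (Fin d)) r,
              Real.exp (-(‖x - y‖ ^ 2) / (4 * t))) :
    ∀ (r t : ℝ), 0 < r → 0 < t → t ≤ r ^ 2 →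
      ∀ x : EuclideanSpace ℝ (Fin d), ‖x‖ ≤ r + Real.sqrt t →
        c * 2 ^ (-(d:ℝ)) ≤
          (4 * Real.pi * t) ^ (-(d:ℝ) / 2) *
            ∫ y in Metric.ball (0 : EuclideanSpace ℝ (Fin d)) r,
              Real.exp (-(‖x - y‖ ^ 2) / (4 * t)) := by
  intro r t hr ht htr x hx
  refine le_trans ?_ (hlemma r t hr ht x hx)
  have hst : Real.sqrt t ≤ r := by
    rw [show r = Real.sqrt (r ^ 2) by rw [Real.sqrt_sq hr.le]]
    exact Real.sqrt_le_sqrt htr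
  have hst0 : 0 ≤ Real.sqrt t := Real.sqrt_nonneg t
  have h2 : (2:ℝ) ^ (-(d:ℝ)) = (1/2 : ℝ) ^ (d:ℝ) := by
    rw [Real.rpow_neg (by norm_num), ← Real.inv_rpow (by norm_num)]
    norm_num
  rw [h2]
  have hbase : (1/2 : ℝ) ≤ r / (r + Real.sqrt t) := by
    rw [div_le_div_iff₀ (by norm_num) (by positivity)]
    linarith
  exact mul_le_mul_of_nonneg_left
    (Real.rpow_le_rpow (by norm_num) hbase (Nat.cast_nonneg d)) hc0.le
end

section
/- Let λ be the largest positive root of e^x = e² x (λ ≈ 3.15) and let p > 0. The function f(s) = s^p / (log(e+s))^β is non-decreasing on [0,∞) if and only if 0 ≤ β ≤ λ p. -/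
open Real

/-- let `λ` be the largest positive root of `e^x = e² x`
(so `λ ≈ 3.15`) and `p > 0`. The function `f(s) = s^p / (log(e+s))^β`
(`β ≥ 0`) is non-decreasing on `[0,∞)` if and only if `β ≤ λ p`. -/
theorem stmt19 (lam : ℝ) (hlam_pos : 0 < lam)
    (hlam_root : exp lam = exp 1 ^ 2 * lam)
    (hlam_max : ∀ x : ℝ, 0 < x → exp x = exp 1 ^ 2 * x → x ≤ lam)
    (p β : ℝ) (hp : 0 < p) (hβ : 0 ≤ β)
    (f : ℝ → ℝ) (hf : ∀ s, f s = s ^ p / (log (exp 1 + s)) ^ β) :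
    MonotoneOn f (Set.Ici 0) ↔ β ≤ lam * p := by
  set E : ℝ := exp 1 with hE
  have hE1 : (1:ℝ) < E := by
    have := Real.exp_one_gt_d9; linarith
  have hEpos : (0:ℝ) < E := by linarith
  -- Step A : lam ≥ 3
  have hlam3 : (3:ℝ) ≤ lam := by
    have hcont : ContinuousOn (fun x : ℝ => exp x - E ^ 2 * x) (Set.Icc 3 4) :=
      (Real.continuous_exp.sub (continuous_const.mul continuous_id)).continuousOn
    have h3 : exp 3 - E ^ 2 * 3 ≤ 0 := by
      have he3 : E < 3 := by have := Real.exp_one_lt_d9; linarith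
      have : exp 3 = E ^ 3 := by
        rw [hE, ← Real.exp_nat_mul]; norm_num
      rw [this]
      have h1 : E - 3 < 0 := by linarith
      nlinarith [mul_nonpos_of_nonneg_of_nonpos (sq_nonneg E) h1.le]
    have h4 : 0 ≤ exp 4 - E ^ 2 * 4 := by
      have he2 : (2:ℝ) < E := by have := Real.exp_one_gt_d9; linarith
      have : exp 4 = E ^ 4 := by
        rw [hE, ← Real.exp_nat_mul]; norm_num
      rw [this]
      have h1 : (0:ℝ) < E ^ 2 - 4 := by nlinarith
      nlinarith [mul_nonneg (sq_nonneg E) h1.le]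
    have := intermediate_value_Icc (by norm_num : (3:ℝ) ≤ 4) hcont
    have h0 : (0:ℝ) ∈ Set.Icc (exp 3 - E ^ 2 * 3) (exp 4 - E ^ 2 * 4) := ⟨h3, h4⟩
    obtain ⟨x, hx, hx0⟩ := this h0
    have hx0' : exp x - E ^ 2 * x = 0 := hx0
    have hxroot : exp x = E ^ 2 * x := by linarith
    have := hlam_max x (by linarith [hx.1]) hxroot
    linarith [hx.1]
  have hlam1 : (1:ℝ) < lam := by linarith
  -- Step B : log lam = lam - 2
  have hloglam : log lam = lam - 2 := by
    have := congrArg log hlam_root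
    rw [Real.log_exp, Real.log_mul (by positivity) hlam_pos.ne', Real.log_pow,
      Real.log_exp] at this
    push_cast at this; linarith
  have hlogElam : log (E * lam) = lam - 1 := by
    rw [Real.log_mul hEpos.ne' hlam_pos.ne', hE, Real.log_exp, hloglam]; ring
  -- Step C : key inequality  lam * s ≤ (E + s) * log (E + s)  for s ≥ 0
  have key : ∀ s : ℝ, 0 ≤ s → lam * s ≤ (E + s) * log (E + s) := by
    intro s hs
    have hy : (0:ℝ) < E + s := by linarith
    have hz : (0:ℝ) < E * lam / (E + s) := by positivity
    have h1 : log (E * lam / (E + s)) ≤ E * lam / (E + s) - 1 :=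
      Real.log_le_sub_one_of_pos hz
    rw [Real.log_div (by positivity) hy.ne', hlogElam] at h1
    have h2 := mul_le_mul_of_nonneg_right h1 hy.le
    have h3 : E * lam / (E + s) * (E + s) = E * lam := div_mul_cancel₀ _ hy.ne'
    nlinarith [h2, h3]
  -- log (E + s) ≥ 1 for s ≥ 0
  have hLone : ∀ s : ℝ, 0 ≤ s → 1 ≤ log (E + s) := by
    intro s hs
    have : E ≤ E + s := by linarith
    calc (1:ℝ) = log E := by rw [hE, Real.log_exp]
      _ ≤ log (E + s) := Real.log_le_log hEpos this
  -- Derivative of f at s > 0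
  have hderiv : ∀ s : ℝ, 0 < s → HasDerivAt f
      ((p * s ^ (p - 1) * (log (E + s)) ^ β -
        s ^ p * (β * (log (E + s)) ^ (β - 1) * (E + s)⁻¹)) /
        ((log (E + s)) ^ β) ^ 2) s := by
    intro s hs
    have hy : (0:ℝ) < E + s := by linarith
    have hL : (0:ℝ) < log (E + s) := lt_of_lt_of_le one_pos (hLone s hs.le)
    have h1 : HasDerivAt (fun x : ℝ => x ^ p) (p * s ^ (p - 1)) s :=
      Real.hasDerivAt_rpow_const (Or.inl hs.ne')
    have h2 : HasDerivAt (fun x : ℝ => E + x) 1 s := by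
      simpa using (hasDerivAt_id s).const_add E
    have h3 : HasDerivAt (fun x : ℝ => log (E + x)) ((E + s)⁻¹) s := by
      have := (Real.hasDerivAt_log hy.ne').comp s h2
      simpa [Function.comp_def] using this
    have h4 : HasDerivAt (fun x : ℝ => (log (E + x)) ^ β)
        (β * (log (E + s)) ^ (β - 1) * (E + s)⁻¹) s := by
      have := (Real.hasDerivAt_rpow_const (p := β) (Or.inl hL.ne')).comp s h3
      simpa [Function.comp_def, mul_comm, mul_assoc] using this
    have hden : (log (E + s)) ^ β ≠ 0 := by positivity
    have h5 := h1.div h4 hden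
    have hfeq : f = fun x : ℝ => x ^ p / (log (E + x)) ^ β := funext hf
    rw [hfeq]
    exact h5
  ----------------------------------------------------------------
  constructor
  · -- monotone → β ≤ lam * p
    intro hmono
    set s₀ : ℝ := E * lam - E with hs₀def
    have hs₀ : (0:ℝ) < s₀ := by nlinarith
    have hEs₀ : E + s₀ = E * lam := by ring
    have hLs₀ : log (E + s₀) = lam - 1 := by rw [hEs₀, hlogElam]
    have hd := hderiv s₀ hs₀
    set D : ℝ := (p * s₀ ^ (p - 1) * (log (E + s₀)) ^ β -
        s₀ ^ p * (β * (log (E + s₀)) ^ (β - 1) * (E + s₀)⁻¹)) /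
        ((log (E + s₀)) ^ β) ^ 2 with hD
    -- derivative is nonneg since f is monotone
    have hD0 : 0 ≤ D := by
      have ht : Filter.Tendsto (slope f s₀) (nhdsWithin s₀ (Set.Ioi s₀)) (nhds D) := by
        have := hasDerivAt_iff_tendsto_slope.1 hd
        exact this.mono_left (nhdsWithin_mono s₀ (fun x hx => ne_of_gt hx))
      refine ge_of_tendsto ht ?_
      filter_upwards [self_mem_nhdsWithin] with x hx
      have hx' : s₀ < x := hx
      have hfle : f s₀ ≤ f x := hmono (Set.mem_Ici.2 hs₀.le)
        (Set.mem_Ici.2 (by linarith)) hx'.le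
      have : 0 ≤ (f x - f s₀) / (x - s₀) :=
        div_nonneg (by linarith) (by linarith)
      simpa [slope_def_field, div_eq_mul_inv] using this
    -- extract the inequality
    have hL : (0:ℝ) < log (E + s₀) := lt_of_lt_of_le one_pos (hLone s₀ hs₀.le)
    have hy : (0:ℝ) < E + s₀ := by linarith
    have hnum : 0 ≤ p * s₀ ^ (p - 1) * (log (E + s₀)) ^ β -
        s₀ ^ p * (β * (log (E + s₀)) ^ (β - 1) * (E + s₀)⁻¹) := by
      have hden : (0:ℝ) < ((log (E + s₀)) ^ β) ^ 2 := by positivity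
      by_contra hneg
      push_neg at hneg
      have : D < 0 := div_neg_of_neg_of_pos hneg hden
      linarith
    -- rewrite s₀^p = s₀^(p-1) * s₀ and L^β = L^(β-1) * L
    have hsp : s₀ ^ p = s₀ ^ (p - 1) * s₀ := by
      rw [← Real.rpow_add_one hs₀.ne' (p - 1)]; norm_num
    have hLβ : (log (E + s₀)) ^ β = (log (E + s₀)) ^ (β - 1) * log (E + s₀) := by
      rw [← Real.rpow_add_one hL.ne' (β - 1)]; norm_num
    rw [hsp, hLβ] at hnum
    have hsp1 : (0:ℝ) < s₀ ^ (p - 1) := Real.rpow_pos_of_pos hs₀ _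
    have hLβ1 : (0:ℝ) < (log (E + s₀)) ^ (β - 1) := Real.rpow_pos_of_pos hL _
    -- numerator = s₀^(p-1) * L^(β-1) * (p * L - β * s₀ * (E+s₀)⁻¹)
    have hfac : 0 ≤ p * log (E + s₀) - β * s₀ * (E + s₀)⁻¹ := by
      have heq : p * s₀ ^ (p - 1) * ((log (E + s₀)) ^ (β - 1) * log (E + s₀)) -
          s₀ ^ (p - 1) * s₀ * (β * (log (E + s₀)) ^ (β - 1) * (E + s₀)⁻¹) =
          s₀ ^ (p - 1) * (log (E + s₀)) ^ (β - 1) *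
            (p * log (E + s₀) - β * s₀ * (E + s₀)⁻¹) := by ring
      rw [heq] at hnum
      by_contra h
      push_neg at h
      have := mul_neg_of_pos_of_neg (mul_pos hsp1 hLβ1) h
      linarith
    -- p * (lam - 1) ≥ β * s₀ / (E + s₀)  with  s₀/(E+s₀) = (lam-1)/lam
    have hfrac : s₀ * (E + s₀)⁻¹ = (lam - 1) / lam := by
      rw [hEs₀, hs₀def]
      field_simp
    rw [hLs₀] at hfac
    rw [mul_assoc, hfrac] at hfac
    have h6 : β * ((lam - 1) / lam) ≤ p * (lam - 1) := by linarith
    have h7 : β * (lam - 1) ≤ p * (lam - 1) * lam := by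
      calc β * (lam - 1) = β * ((lam - 1) / lam) * lam := by field_simp
        _ ≤ p * (lam - 1) * lam := mul_le_mul_of_nonneg_right h6 hlam_pos.le
    nlinarith [h7]
  · -- β ≤ lam * p → monotone
    intro hbl
    have hcont : ContinuousOn f (Set.Ici 0) := by
      have hfeq : f = fun x : ℝ => x ^ p / (log (E + x)) ^ β := funext hf
      rw [hfeq]
      intro s hs
      have hs0 : (0:ℝ) ≤ s := hs
      have hy : (0:ℝ) < E + s := by linarith
      have hL : (0:ℝ) < log (E + s) := lt_of_lt_of_le one_pos (hLone s hs0)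
      apply ContinuousWithinAt.div
      · exact (Real.continuousAt_rpow_const s p (Or.inr hp.le)).continuousWithinAt
      · have h1 : ContinuousAt (fun x : ℝ => log (E + x)) s :=
          (Real.continuousAt_log hy.ne').comp (by fun_prop)
        exact (h1.rpow_const (Or.inl hL.ne')).continuousWithinAt
      · positivity
    refine monotoneOn_of_deriv_nonneg (convex_Ici 0) hcont ?_ ?_
    · intro s hs
      rw [interior_Ici] at hs
      exact ((hderiv s hs).differentiableAt).differentiableWithinAt
    · intro s hs
      rw [interior_Ici] at hs
      have hs' : (0:ℝ) < s := hs
      have hy : (0:ℝ) < E + s := by linarith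
      have hL : (0:ℝ) < log (E + s) := lt_of_lt_of_le one_pos (hLone s hs'.le)
      rw [(hderiv s hs').deriv]
      apply div_nonneg _ (by positivity)
      have hsp : s ^ p = s ^ (p - 1) * s := by
        rw [← Real.rpow_add_one hs'.ne' (p - 1)]; norm_num
      have hLβ : (log (E + s)) ^ β = (log (E + s)) ^ (β - 1) * log (E + s) := by
        rw [← Real.rpow_add_one hL.ne' (β - 1)]; norm_num
      rw [hsp, hLβ]
      have heq : p * s ^ (p - 1) * ((log (E + s)) ^ (β - 1) * log (E + s)) -
          s ^ (p - 1) * s * (β * (log (E + s)) ^ (β - 1) * (E + s)⁻¹) =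
          s ^ (p - 1) * (log (E + s)) ^ (β - 1) *
            (p * log (E + s) - β * s * (E + s)⁻¹) := by ring
      rw [heq]
      apply mul_nonneg (by positivity)
      -- need p * L ≥ β * s / (E + s), i.e. p * L * (E+s) ≥ β * s
      have hkey := key s hs'.le
      have h1 : β * s ≤ p * ((E + s) * log (E + s)) := by
        calc β * s ≤ lam * p * s := mul_le_mul_of_nonneg_right hbl hs'.le
          _ = p * (lam * s) := by ring
          _ ≤ p * ((E + s) * log (E + s)) := by
              exact mul_le_mul_of_nonneg_left hkey hp.le
      have h2 : β * s * (E + s)⁻¹ ≤ p * log (E + s) := by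
        rw [← mul_le_mul_iff_of_pos_right hy]
        calc β * s * (E + s)⁻¹ * (E + s) = β * s := by field_simp
          _ ≤ p * ((E + s) * log (E + s)) := h1
          _ = p * log (E + s) * (E + s) := by ring
      linarith
end
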